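/- The set of *-classes of alternating-walk strings on (Q(n), I(n)) is in bijection with the set S = {(a,b,η) : 0 ≤ a < b ≤ n, η ∈ {+1,−1}}. The bijection sends a string w with f_w strictly increasing to (f_w(0), f_w(m), η), where η = +1 if the last letter of w is an honest arrow and η = −1 otherwise. -/

import Mathlib

/-!  Combinatorics of walks and strings on the quiver `Q(n)` with relations `I(n)`.

`Q(n)` has vertices `0,…,n` and arrows `α i : i+1 → i` and `β i : i → i+1`
for `0 ≤ i ≤ n-1`.  A letter is an arrow or a formal inverse of an arrow. -/

/-- A letter of a walk on `Q(n)`: an arrow `α i` or `β i`, or a formal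
inverse `α i *` (`ia i`) or `β i *` (`ib i`). -/
inductive Letter where
  | a (i : ℕ)   -- the arrow `α i : i+1 → i`
  | b (i : ℕ)   -- the arrow `β i : i → i+1`
  | ia (i : ℕ)  -- the formal inverse of `α i`
  | ib (i : ℕ)  -- the formal inverse of `β i`
  deriving DecidableEq

namespace Letter

/-- The `*`-operation on letters (formal inversion). -/
def star : Letter → Letter
  | a i => ia i
  | ia i => a i
  | b i => ib i
  | ib i => b i

/-- Source of a letter. -/
def src : Letter → ℕ
  | a i => i + 1
  | ia i => i
  | b i => i
  | ib i => i + 1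

/-- Target of a letter. -/
def tgt : Letter → ℕ
  | a i => i
  | ia i => i + 1
  | b i => i + 1
  | ib i => i

/-- Whether a letter is an honest arrow of `Q(n)` (not a formal inverse). -/
def honest : Letter → Bool
  | a _ => true
  | b _ => true
  | ia _ => false
  | ib _ => false

/-- Whether a letter is a letter of the quiver `Q(n)` (arrows `α i, β i` only
exist for `i < n`). -/
def valid (n : ℕ) : Letter → Prop
  | a i => i < n
  | b i => i < n
  | ia i => i < n
  | ib i => i < n

end Letter

open Letter

/-- A walk `γ₁γ₂…γₘ` on `Q(n)`, encoded as the list `[γ₁, …, γₘ]`: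
all letters exist in `Q(n)` and `t (γ_{k+1}) = s (γ_k)` for consecutive letters. -/
def IsWalk (n : ℕ) (w : List Letter) : Prop :=
  (∀ c ∈ w, c.valid n) ∧ w.Chain' (fun c d => d.tgt = c.src)

/-- A walk is reduced if no letter is immediately followed by its formal inverse:
`γ_k ≠ γ_{k+1}*`. -/
def IsReducedWalk (w : List Letter) : Prop :=
  w.Chain' (fun c d => c ≠ d.star)

/-- The formal inverse `w* = γₘ* … γ₁*` of a walk `w = γ₁…γₘ`. -/
def starWalk (w : List Letter) : List Letter :=
  (w.map Letter.star).reverse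

/-- The source `s(w) = s(γₘ)` of a (nonempty) walk. -/
def walkSrc (w : List Letter) : ℕ := (w.getLastD (Letter.a 0)).src

/-- The function `f_w : {0,…,m} → {0,…,n}` attached to a walk `w = γ₁…γₘ`:
`f_w 0 = s(γₘ)` and `f_w j = t(γ_{m-j+1})` for `1 ≤ j ≤ m`. -/
def fW (w : List Letter) (j : ℕ) : ℕ :=
  if j = 0 then (w.getLastD (Letter.a 0)).src
  else ((w.getD (w.length - j) (Letter.a 0))).tgt

/-- The target `t(w) = t(γ₁)` of a (nonempty) walk. -/
def walkTgt (w : List Letter) : ℕ := fW w w.length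

/-- The length-two paths which are monomials appearing in the generators of the
ideal `I(n)`: `α i · α (i+1)`, `β (i+1) · β i`, `α j · β j` (coming from `α 0 β 0`
and from the binomial relations `β i α i - α (i+1) β (i+1)`, `0 ≤ i ≤ n-2`), and
`β i · α i` for `0 ≤ i ≤ n-2`.  A pair `(x, y)` stands for the path `x y`
(first traverse `y`, then `x`). -/
def ForbiddenPair (n : ℕ) (x y : Letter) : Prop :=
  (∃ i, x = Letter.a i ∧ y = Letter.a (i + 1)) ∨
  (∃ i, x = Letter.b (i + 1) ∧ y = Letter.b i) ∨
  (∃ j, x = Letter.a j ∧ y = Letter.b j) ∨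
  (∃ i, i + 2 ≤ n ∧ x = Letter.b i ∧ y = Letter.a i)

/-- A string on `(Q(n), I(n))`: a reduced walk such that no path contained in it
(i.e. no contiguous subword of `w` consisting of honest arrows, and no formal
inverse of such a subword) is a monomial appearing in a generator of `I(n)`.
Since all monomials appearing in the generators of `I(n)` have length two, this
amounts to forbidding the pairs of `ForbiddenPair` in both orientations. -/
def IsString (n : ℕ) (w : List Letter) : Prop :=
  IsWalk n w ∧ IsReducedWalk w ∧
    ∀ x y : Letter, [x, y] <:+: w →
      ¬ ForbiddenPair n x y ∧ ¬ ForbiddenPair n y.star x.star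

/-- An alternating walk: `γ_k` is an honest arrow iff `γ_{k+1}` is a formal
inverse, for all `k < m`. -/
def IsAlternating (w : List Letter) : Prop :=
  w.Chain' (fun c d => c.honest = !d.honest)

/-- A path on `Q(n)`: a walk all of whose letters are honest arrows. -/
def IsPath (n : ℕ) (p : List Letter) : Prop :=
  IsWalk n p ∧ ∀ c ∈ p, c.honest = true

/-- The `h`-fold concatenation `w^h` of a walk with itself. -/
def powWalk (w : List Letter) (h : ℕ) : List Letter :=
  (List.replicate h w).flatten
/-! ### Auxiliary definitions and lemmas -/

namespace StringAux

open Letter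

/-- "Upward" letter: `b j` (honest) or `ia j` (inverse), both go `j → j+1`. -/
def up (j : ℕ) (h : Bool) : Letter := if h then .b j else .ia j

/-- "Downward" letter: `a j` (honest) or `ib j` (inverse), both go `j+1 → j`. -/
def dn (j : ℕ) (h : Bool) : Letter := if h then .a j else .ib j

@[simp] lemma src_up (j h) : (up j h).src = j := by cases h <;> rfl
@[simp] lemma tgt_up (j h) : (up j h).tgt = j + 1 := by cases h <;> rfl
@[simp] lemma honest_up (j h) : (up j h).honest = h := by cases h <;> rfl
@[simp] lemma src_dn (j h) : (dn j h).src = j + 1 := by cases h <;> rfl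
@[simp] lemma tgt_dn (j h) : (dn j h).tgt = j := by cases h <;> rfl
@[simp] lemma honest_dn (j h) : (dn j h).honest = h := by cases h <;> rfl
@[simp] lemma star_up (j h) : (up j h).star = dn j (!h) := by cases h <;> rfl
@[simp] lemma star_dn (j h) : (dn j h).star = up j (!h) := by cases h <;> rfl
@[simp] lemma valid_up {n} (j h) : (up j h).valid n ↔ j < n := by cases h <;> rfl
@[simp] lemma up_ne_dn (j j' h h') : up j h ≠ dn j' h' := by
  cases h <;> cases h' <;> simp [up, dn]
@[simp] lemma dn_ne_up (j j' h h') : dn j h ≠ up j' h' := by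
  cases h <;> cases h' <;> simp [up, dn]
@[simp] lemma up_inj {j j' h h'} : up j h = up j' h' ↔ j = j' ∧ h = h' := by
  cases h <;> cases h' <;> simp [up, dn]
@[simp] lemma dn_inj {j j' h h'} : dn j h = dn j' h' ↔ j = j' ∧ h = h' := by
  cases h <;> cases h' <;> simp [up, dn]

lemma letter_form (c : Letter) : (∃ j h, c = up j h) ∨ ∃ j h, c = dn j h := by
  cases c with
  | a j => exact Or.inr ⟨j, true, rfl⟩
  | b j => exact Or.inl ⟨j, true, rfl⟩
  | ia j => exact Or.inl ⟨j, false, rfl⟩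
  | ib j => exact Or.inr ⟨j, false, rfl⟩

@[simp] lemma star_star (c : Letter) : c.star.star = c := by cases c <;> rfl

/-- The canonical increasing alternating walk of length `m` from `a` to `a+m`,
whose first letter `γ₁` (at index `a+m-1`) is honest iff `h`. -/
def chainUpF (a : ℕ) : Bool → ℕ → List Letter
  | _, 0 => []
  | h, m + 1 => up (a + m) h :: chainUpF a (!h) m

@[simp] lemma chainUpF_len (a h m) : (chainUpF a h m).length = m := by
  induction m generalizing h with
  | zero => rfl
  | succ m ih => simp [chainUpF, ih]

@[simp] lemma chainUpF_ne_nil (a h m) : chainUpF a h (m+1) ≠ [] := by simp [chainUpF]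

lemma chainUpF_getLastD (a h m x) :
    (chainUpF a h (m+1)).getLastD x = up a (xor h m.bodd) := by
  induction m generalizing h x with
  | zero => simp [chainUpF]
  | succ m ih =>
      rw [show chainUpF a h (m+2) = up (a+(m+1)) h :: chainUpF a (!h) (m+1) from rfl,
        List.getLastD_cons, ih]
      cases h <;> cases hm : m.bodd <;> simp [Nat.bodd_succ, hm]

lemma chainUpF_concat (a h m) :
    chainUpF a h (m+1) = chainUpF (a+1) h m ++ [up a (xor h m.bodd)] := by
  induction m generalizing h with
  | zero => simp [chainUpF]
  | succ m ih =>
      rw [show chainUpF a h (m+2) = up (a+(m+1)) h :: chainUpF a (!h) (m+1) from rfl, ih]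
      rw [show chainUpF (a+1) h (m+1) = up (a+1+m) h :: chainUpF (a+1) (!h) m from rfl]
      have : xor (!h) m.bodd = xor h (m+1).bodd := by
        cases h <;> cases hm : m.bodd <;> simp [Nat.bodd_succ, hm]
      rw [this]
      simp [show a + 1 + m = a + (m+1) by omega]

lemma starWalk_concat (u : List Letter) (x : Letter) :
    starWalk (u ++ [x]) = x.star :: starWalk u := by
  simp [starWalk]

@[simp] lemma starWalk_starWalk (u : List Letter) : starWalk (starWalk u) = u := by
  simp [starWalk, List.map_reverse, List.map_map, Function.comp_def]

@[simp] lemma starWalk_length (u : List Letter) : (starWalk u).length = u.length := by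
  simp [starWalk]

lemma starWalk_chainUpF (a h m) :
    starWalk (chainUpF a h (m+1)) =
      dn a (!(xor h m.bodd)) :: starWalk (chainUpF (a+1) h m) := by
  rw [chainUpF_concat, starWalk_concat, star_up]

end StringAux
namespace StringAux
open Letter

lemma chainUpF_chain' (R : Letter → Letter → Prop)
    (hR : ∀ j h, R (up (j+1) h) (up j (!h))) (a : ℕ) :
    ∀ m h, (chainUpF a h m).Chain' R := by
  intro m
  induction m with
  | zero => intro h; exact List.isChain_nil
  | succ m ih =>
      intro h
      cases m with
      | zero => exact List.isChain_singleton _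
      | succ k =>
          rw [show chainUpF a h (k+2) = up (a+(k+1)) h :: (up (a+k) (!h) :: chainUpF a (!!h) k)
            from rfl]
          refine List.isChain_cons_cons.mpr ?_
          exact ⟨hR (a+k) h, ih (!h)⟩

lemma chainUpF_valid {n a m} (hmn : a + m ≤ n) : ∀ c ∈ chainUpF a h m, c.valid n := by
  induction m generalizing h with
  | zero => simp [chainUpF]
  | succ m ih =>
      intro c hc
      rw [show chainUpF a h (m+1) = up (a+m) h :: chainUpF a (!h) m from rfl] at hc
      rcases List.mem_cons.1 hc with hc | hc
      · subst hc; simp only [valid_up]; omega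
      · exact ih (by omega) c hc

lemma isWalk_chainUpF {n a m h} (hmn : a + m ≤ n) : IsWalk n (chainUpF a h m) := by
  refine ⟨chainUpF_valid hmn, ?_⟩
  exact chainUpF_chain' _ (fun j h => by simp) a m h

lemma isReduced_chainUpF (a h m) : IsReducedWalk (chainUpF a h m) :=
  chainUpF_chain' _ (fun j h => by simp) a m h

lemma isAlt_chainUpF (a h m) : IsAlternating (chainUpF a h m) :=
  chainUpF_chain' _ (fun j h => by simp) a m h

lemma forbidden_honest {n x y} (h : ForbiddenPair n x y) :
    x.honest = true ∧ y.honest = true := by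
  rcases h with ⟨i, hx, hy⟩ | ⟨i, hx, hy⟩ | ⟨i, hx, hy⟩ | ⟨i, _, hx, hy⟩ <;>
    subst hx <;> subst hy <;> exact ⟨rfl, rfl⟩

@[simp] lemma honest_star (c : Letter) : c.star.honest = !c.honest := by cases c <;> rfl

lemma alt_string {n w} (hw : IsWalk n w) (hr : IsReducedWalk w) (ha : IsAlternating w) :
    IsString n w := by
  refine ⟨hw, hr, fun x y hxy => ?_⟩
  have h2 : List.Chain' (fun c d => c.honest = !d.honest) [x, y] := ha.infix hxy
  have hxyh : x.honest = !y.honest := by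
    exact (List.isChain_cons_cons.mp h2).1
  constructor
  · intro hf
    obtain ⟨h1, h2⟩ := forbidden_honest hf
    rw [h1, h2] at hxyh; simp at hxyh
  · intro hf
    obtain ⟨h1, h2⟩ := forbidden_honest hf
    simp only [honest_star, Bool.not_eq_true'] at h1 h2
    rw [h2, h1] at hxyh; simp at hxyh

lemma isString_chainUpF {n a m h} (hmn : a + m ≤ n) : IsString n (chainUpF a h m) :=
  alt_string (isWalk_chainUpF hmn) (isReduced_chainUpF a h m) (isAlt_chainUpF a h m)

end StringAux
namespace StringAux
open Letter

lemma chainUpF_getD {a m} (x : Letter) : ∀ k h, k < m →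
    ∃ h', (chainUpF a h m).getD k x = up (a + m - 1 - k) h' := by
  induction m with
  | zero => omega
  | succ m ih =>
      intro k h hk
      rw [show chainUpF a h (m+1) = up (a+m) h :: chainUpF a (!h) m from rfl]
      cases k with
      | zero => exact ⟨h, by simp [show a + (m+1) - 1 - 0 = a + m by omega]⟩
      | succ k =>
          obtain ⟨h', hh'⟩ := ih k (!h) (by omega)
          refine ⟨h', ?_⟩
          rw [List.getD_cons_succ, hh', show a + (m+1) - 1 - (k+1) = a + m - 1 - k by omega]

lemma fW_chainUpF (a h m) : ∀ j ≤ m + 1, fW (chainUpF a h (m+1)) j = a + j := by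
  intro j hj
  unfold fW
  rcases Nat.eq_zero_or_pos j with rfl | hj0
  · rw [if_pos rfl, chainUpF_getLastD, src_up]; omega
  · rw [if_neg (by omega), chainUpF_len]
    obtain ⟨h', hh'⟩ := chainUpF_getD (a := a) (m := m+1) (Letter.a 0) (m+1-j) h (by omega)
    rw [hh', tgt_up]
    omega

lemma mono_chainUpF (a h m) :
    StrictMonoOn (fW (chainUpF a h (m+1))) (Set.Iic (chainUpF a h (m+1)).length) := by
  intro x hx y hy hxy
  rw [chainUpF_len] at hx hy
  rw [fW_chainUpF a h m x hx, fW_chainUpF a h m y hy]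
  omega

lemma starWalk_cons (c : Letter) (t : List Letter) :
    starWalk (c :: t) = starWalk t ++ [c.star] := by
  simp [starWalk]

lemma fW_star_zero (a h m) :
    fW (starWalk (chainUpF a h (m+1))) 0 = a + m + 1 := by
  unfold fW
  rw [if_pos rfl, show chainUpF a h (m+1) = up (a+m) h :: chainUpF a (!h) m from rfl,
    starWalk_cons, List.getLastD_concat, star_up, src_dn]

lemma fW_star_top (a h m) :
    fW (starWalk (chainUpF a h (m+1))) (starWalk (chainUpF a h (m+1))).length = a := by
  unfold fW
  rw [if_neg (by simp [chainUpF]), Nat.sub_self, starWalk_chainUpF, List.getD_cons_zero, tgt_dn]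

end StringAux
namespace StringAux
open Letter

lemma bodd_flip (h : Bool) (m : ℕ) : xor h (m+1).bodd = !(xor h m.bodd) := by
  cases h <;> cases hm : m.bodd <;> simp [Nat.bodd_succ, hm]

lemma classify {n : ℕ} : ∀ w : List Letter, IsWalk n w → IsReducedWalk w →
    IsAlternating w → w ≠ [] →
    ∃ a h m, a + (m+1) ≤ n ∧
      (w = chainUpF a h (m+1) ∨ w = starWalk (chainUpF a h (m+1))) := by
  intro w
  induction w with
  | nil => intro _ _ _ hne; exact absurd rfl hne
  | cons c rest ih =>
    intro hw hr ha _
    cases rest with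
    | nil =>
        have hcv : c.valid n := hw.1 c (by simp)
        rcases letter_form c with ⟨j, h, rfl⟩ | ⟨j, h, rfl⟩
        · refine ⟨j, h, 0, ?_, Or.inl ?_⟩
          · have : j < n := (valid_up (n := n) j h).1 hcv
            omega
          · simp [chainUpF]
        · refine ⟨j, !h, 0, ?_, Or.inr ?_⟩
          · have : j < n := by cases h <;> exact hcv
            omega
          · simp [chainUpF, starWalk]
    | cons d t =>
        obtain ⟨a, h, m, hbound, hform⟩ :=
          ih ⟨fun x hx => hw.1 x (List.mem_cons_of_mem _ hx), hw.2.tail⟩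
            hr.tail ha.tail (by simp)
        have htgt : d.tgt = c.src := (List.isChain_cons_cons.mp hw.2).1
        have hred : c ≠ d.star := (List.isChain_cons_cons.mp hr).1
        have halt : c.honest = !d.honest := (List.isChain_cons_cons.mp ha).1
        rcases hform with hf | hf
        · -- rest is an increasing chain
          rw [show chainUpF a h (m+1) = up (a+m) h :: chainUpF a (!h) m from rfl] at hf
          injection hf with hd ht
          subst hd
          rcases letter_form c with ⟨j, hc, rfl⟩ | ⟨j, hc, rfl⟩
          · -- c = up j hc : the chain extends
            have hj : j = a + m + 1 := by
              rw [tgt_up, src_up] at htgt; omega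
            have hhc : hc = !h := by
              rw [honest_up, honest_up] at halt; exact halt
            subst hj; subst hhc
            refine ⟨a, !h, m+1, ?_, Or.inl ?_⟩
            · have : a + m + 1 < n := by
                have := hw.1 _ List.mem_cons_self
                exact (valid_up (n := n) _ _).1 this
              omega
            · rw [ht]
              show _ = up (a+(m+1)) (!h) :: chainUpF a (!!h) (m+1)
              rw [Bool.not_not]
              rfl
          · -- c = dn j hc : impossible (equals star of head)
            exfalso
            have hj : j = a + m := by
              rw [tgt_up, src_dn] at htgt; omega
            have hhc : hc = !h := by
              rw [honest_dn, honest_up] at halt; exact halt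
            apply hred
            rw [star_up, hj, hhc]
        · -- rest is a decreasing chain
          rw [starWalk_chainUpF] at hf
          injection hf with hd ht
          subst hd
          rcases letter_form c with ⟨j, hc, rfl⟩ | ⟨j, hc, rfl⟩
          · exfalso
            have hj : j = a := by
              rw [tgt_dn, src_up] at htgt; omega
            have hhc : hc = !(!(xor h m.bodd)) := by
              rw [honest_up, honest_dn] at halt; exact halt
            apply hred
            rw [star_dn, hj, hhc]
          · -- c = dn j hc : the chain extends downwards
            have hj : j + 1 = a := by
              rw [tgt_dn, src_dn] at htgt; omega
            have hhc : hc = xor h m.bodd := by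
              rw [honest_dn, honest_dn, Bool.not_not] at halt; exact halt
            refine ⟨j, h, m+1, by omega, Or.inr ?_⟩
            rw [chainUpF_concat, starWalk_concat, star_up, bodd_flip, Bool.not_not]
            rw [show j + 1 = a from hj, ht, hhc, starWalk_chainUpF]

end StringAux
namespace StringAux
open Letter

/-- The data of a walk: `(f_w 0, f_w m, η)`. -/
noncomputable def dataOf (w : List Letter) : ℕ × ℕ × ℤ :=
  (fW w 0, fW w w.length, if (w.getLastD (Letter.a 0)).honest then (1 : ℤ) else -1)

lemma dataOf_chainUpF (a h m) :
    dataOf (chainUpF a h (m+1)) =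
      (a, a + (m+1), if xor h m.bodd then (1:ℤ) else -1) := by
  unfold dataOf
  rw [chainUpF_len, fW_chainUpF a h m 0 (by omega), fW_chainUpF a h m (m+1) le_rfl,
    chainUpF_getLastD, honest_up, Nat.add_zero]

lemma notMono_star (a h m) :
    ¬ StrictMonoOn (fW (starWalk (chainUpF a h (m+1))))
      (Set.Iic (starWalk (chainUpF a h (m+1))).length) := by
  intro hmono
  have hlen : (starWalk (chainUpF a h (m+1))).length = m + 1 := by
    rw [starWalk_length, chainUpF_len]
  have := hmono (Set.mem_Iic.mpr (Nat.zero_le _)) Set.self_mem_Iic (by omega)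
  rw [fW_star_zero, fW_star_top] at this
  omega

variable (n : ℕ)

/-- The bijection. -/
noncomputable def phi (w : {w : List Letter // IsString n w ∧ IsAlternating w ∧ 0 < w.length}) :
    ℕ × ℕ × ℤ :=
  open scoped Classical in
  if StrictMonoOn (fW w.1) (Set.Iic w.1.length) then dataOf w.1 else dataOf (starWalk w.1)

lemma key (w : {w : List Letter // IsString n w ∧ IsAlternating w ∧ 0 < w.length}) :
    ∃ a hb m, a + (m+1) ≤ n ∧
      (w.1 = chainUpF a hb (m+1) ∨ w.1 = starWalk (chainUpF a hb (m+1))) ∧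
      phi n w = (a, a + (m+1), if xor hb m.bodd then (1:ℤ) else -1) := by
  obtain ⟨w, ⟨hw, hr, _⟩, ha, hl⟩ := w
  obtain ⟨a, hb, m, hbound, hform⟩ :=
    classify w hw hr ha (by intro hnil; rw [hnil] at hl; simp at hl)
  refine ⟨a, hb, m, hbound, hform, ?_⟩
  unfold phi
  rcases hform with rfl | rfl
  · rw [if_pos (mono_chainUpF a hb m), dataOf_chainUpF]
  · rw [if_neg (notMono_star a hb m), starWalk_starWalk, dataOf_chainUpF]

end StringAux
/-- the set of `*`-classes of alternating-walk strings on
`(Q(n), I(n))` is in bijection with `S = {(a,b,η) : 0 ≤ a < b ≤ n, η ∈ {±1}}`.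
Formally: there is a map `φ` from alternating strings of positive length to
`ℕ × ℕ × ℤ` landing in `S`, sending a string `w` with `f_w` strictly increasing
to `(f_w 0, f_w m, η)` where `η = 1` iff the last letter `γₘ` of `w` is an
honest arrow, such that `φ w = φ v` iff `w, v` are in the same `*`-class, and
every element of `S` is attained. -/
theorem stmt_8 (n : ℕ) (hn : 1 ≤ n) :
    ∃ φ : {w : List Letter // IsString n w ∧ IsAlternating w ∧ 0 < w.length} →
        ℕ × ℕ × ℤ,
      (∀ w, (φ w).1 < (φ w).2.1 ∧ (φ w).2.1 ≤ n ∧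
        ((φ w).2.2 = 1 ∨ (φ w).2.2 = -1)) ∧
      (∀ w, StrictMonoOn (fW w.1) (Set.Iic w.1.length) →
        φ w = (fW w.1 0, fW w.1 w.1.length,
          if (w.1.getLastD (Letter.a 0)).honest then (1 : ℤ) else -1)) ∧
      (∀ w v, φ w = φ v ↔ (v.1 = w.1 ∨ v.1 = starWalk w.1)) ∧
      (∀ a b : ℕ, ∀ η : ℤ, a < b → b ≤ n → (η = 1 ∨ η = -1) →
        ∃ w, φ w = (a, b, η)) := by
    classical
  refine ⟨StringAux.phi n, ?_, ?_, ?_, ?_⟩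
  · -- lands in S
    intro w
    obtain ⟨a, hb, m, hbound, _, hval⟩ := StringAux.key n w
    rw [hval]
    dsimp only
    refine ⟨by omega, by omega, ?_⟩
    cases xor hb m.bodd <;> simp
  · -- value on strictly increasing strings
    intro w hmono
    unfold StringAux.phi
    rw [if_pos hmono]
    rfl
  · -- φ separates exactly the *-classes
    intro w v
    constructor
    · intro heq
      obtain ⟨a, hb, m, _, hfw, hvw⟩ := StringAux.key n w
      obtain ⟨a', hb', m', _, hfv, hvv⟩ := StringAux.key n v
      rw [hvw, hvv, Prod.ext_iff, Prod.ext_iff] at heq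
      obtain ⟨ha1, ha2, ha3⟩ := heq
      simp only at ha1 ha2 ha3
      have ham : a = a' ∧ m = m' := by omega
      obtain ⟨rfl, rfl⟩ := ham
      have hbb : hb = hb' := by
        cases h1 : xor hb m.bodd <;> cases h2 : xor hb' m.bodd <;>
          rw [h1, h2] at ha3 <;> first | (cases hb <;> cases hb' <;> simp_all) | norm_num at ha3
      subst hbb
      rcases hfw with hfw | hfw <;> rcases hfv with hfv | hfv
      · exact Or.inl (hfv.trans hfw.symm)
      · exact Or.inr (by rw [hfv, hfw])
      · exact Or.inr (by rw [hfv, hfw, StringAux.starWalk_starWalk])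
      · exact Or.inl (hfv.trans hfw.symm)
    · intro hvw
      obtain ⟨a, hb, m, _, hfw, hvw'⟩ := StringAux.key n w
      rcases hvw with h1 | h1
      · unfold StringAux.phi
        rw [h1]
      · rcases hfw with hw1 | hw1
        · have hv1 : v.1 = starWalk (StringAux.chainUpF a hb (m+1)) := by rw [h1, hw1]
          rw [hvw']
          unfold StringAux.phi
          rw [hv1, if_neg (StringAux.notMono_star a hb m), StringAux.starWalk_starWalk,
            StringAux.dataOf_chainUpF]
        · have hv1 : v.1 = StringAux.chainUpF a hb (m+1) := by
            rw [h1, hw1, StringAux.starWalk_starWalk]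
          rw [hvw']
          unfold StringAux.phi
          rw [hv1, if_pos (StringAux.mono_chainUpF a hb m), StringAux.dataOf_chainUpF]
  · -- surjectivity onto S
    intro a b η hab hbn hη
    obtain ⟨m, hm⟩ : ∃ m, b = a + (m + 1) := ⟨b - a - 1, by omega⟩
    subst hm
    refine ⟨⟨StringAux.chainUpF a (xor (decide (η = 1)) m.bodd) (m+1),
      StringAux.isString_chainUpF (by omega), StringAux.isAlt_chainUpF _ _ _,
      by rw [StringAux.chainUpF_len]; omega⟩, ?_⟩
    unfold StringAux.phi
    rw [if_pos (StringAux.mono_chainUpF _ _ _), StringAux.dataOf_chainUpF]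
    have hx : xor (xor (decide (η = 1)) m.bodd) m.bodd = decide (η = 1) := by
      cases decide (η = 1) <;> cases m.bodd <;> simp
    rw [hx]
    rcases hη with rfl | rfl <;> simp
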